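/- Variance of the efficient score: under Y = Q(T,Z) + ζ with E[ζ|T,Z] = 0, the variance of φ₀ = (T/g(Z))(Y−Q(1,Z)) − ((1−T)/(1−g(Z)))(Y−Q(0,Z)) + Q(1,Z) − Q(0,Z) − ψ₀ decomposes as E[φ₀²] = E[ζ²·(T/g(Z)² + (1−T)/(1−g(Z))²)] + Var(Q(1,Z) − Q(0,Z)). -/

import Mathlib

open MeasureTheory ProbabilityTheory

/-- Variance decomposition of the efficient score: with `Y = Q(T,Z) + ζ` and
`E[ζ | T,Z] = 0`, the second moment of the efficient score
`φ₀ = (T/g(Z))(Y - Q(1,Z)) - ((1-T)/(1-g(Z)))(Y - Q(0,Z)) + Q(1,Z) - Q(0,Z) - ψ₀`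
equals `E[ζ²·(T/g(Z)² + (1-T)/(1-g(Z))²)] + Var(Q(1,Z) - Q(0,Z))`. -/
theorem stmt13
    {Ω : Type*} [MeasurableSpace Ω]
    (μ : Measure Ω) [IsProbabilityMeasure μ]
    (Y T Z ζ : Ω → ℝ)
    (hY : Measurable Y) (hT : Measurable T) (hZ : Measurable Z) (hζ : Measurable ζ)
    (hTbin : ∀ ω, T ω = 0 ∨ T ω = 1)
    (ε : ℝ) (hε : 0 < ε)
    (g : ℝ → ℝ) (hg : Measurable g)
    (hgdef : (fun ω => g (Z ω)) =ᵐ[μ] μ[T | MeasurableSpace.comap Z inferInstance])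
    (hpos : ∀ᵐ ω ∂μ, ε ≤ g (Z ω) ∧ g (Z ω) ≤ 1 - ε)
    (Q : ℝ → ℝ → ℝ) (hQmeas : ∀ t, Measurable (Q t))
    (hmodel : ∀ ω, Y ω = Q (T ω) (Z ω) + ζ ω)
    (hζmean : μ[ζ | MeasurableSpace.comap (fun ω => (T ω, Z ω)) inferInstance] =ᵐ[μ] 0)
    (hζ2 : MemLp ζ 2 μ)
    (hQ2 : ∀ t, t = 0 ∨ t = 1 → MemLp (fun ω => Q t (Z ω)) 2 μ)
    (hY2 : MemLp Y 2 μ)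
    (ψ₀ : ℝ) (hψ₀ : ψ₀ = ∫ ω, (Q 1 (Z ω) - Q 0 (Z ω)) ∂μ) :
    ∫ ω, (T ω / g (Z ω) * (Y ω - Q 1 (Z ω))
        - (1 - T ω) / (1 - g (Z ω)) * (Y ω - Q 0 (Z ω))
        + (Q 1 (Z ω) - Q 0 (Z ω)) - ψ₀) ^ 2 ∂μ
      = ∫ ω, ζ ω ^ 2 * (T ω / g (Z ω) ^ 2 + (1 - T ω) / (1 - g (Z ω)) ^ 2) ∂μ
        + ∫ ω, ((Q 1 (Z ω) - Q 0 (Z ω)) - ψ₀) ^ 2 ∂μ := by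
  set h : Ω → ℝ := fun ω =>
    (T ω / g (Z ω) - (1 - T ω) / (1 - g (Z ω))) * (Q 1 (Z ω) - Q 0 (Z ω) - ψ₀) with hh
  set B : Ω → ℝ := fun ω => Q 1 (Z ω) - Q 0 (Z ω) - ψ₀ with hB
  -- pointwise (a.e.) algebraic identity
  have key : (fun ω => (T ω / g (Z ω) * (Y ω - Q 1 (Z ω))
      - (1 - T ω) / (1 - g (Z ω)) * (Y ω - Q 0 (Z ω))
      + (Q 1 (Z ω) - Q 0 (Z ω)) - ψ₀) ^ 2)
      =ᵐ[μ] (fun ω => ζ ω ^ 2 * (T ω / g (Z ω) ^ 2 + (1 - T ω) / (1 - g (Z ω)) ^ 2)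
        + (2 * (h ω * ζ ω) + B ω ^ 2)) := by
    filter_upwards [hpos] with ω ⟨hge, hle⟩
    have hg0 : g (Z ω) ≠ 0 := ne_of_gt (lt_of_lt_of_le hε hge)
    have hg1 : 1 - g (Z ω) ≠ 0 := by
      have : ε ≤ 1 - g (Z ω) := by linarith
      exact ne_of_gt (lt_of_lt_of_le hε this)
    rcases hTbin ω with h0 | h1
    · rw [hmodel ω, h0]; simp only [hh, hB, h0]; field_simp; ring
    · rw [hmodel ω, h1]; simp only [hh, hB, h1]; field_simp; ring
  -- basic integrability facts
  have hζint : Integrable ζ μ := hζ2.integrable (by norm_num)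
  have hζsq : Integrable (fun ω => ζ ω ^ 2) μ := hζ2.integrable_sq
  have hB2 : MemLp B 2 μ :=
    ((hQ2 1 (Or.inr rfl)).sub (hQ2 0 (Or.inl rfl))).sub (memLp_const ψ₀)
  have hBsq : Integrable (fun ω => B ω ^ 2) μ := hB2.integrable_sq
  have hmeas_h : Measurable h := by
    apply Measurable.mul
    · exact (hT.div (hg.comp hZ)).sub
        ((measurable_const.sub hT).div (measurable_const.sub (hg.comp hZ)))
    · exact (((hQmeas 1).comp hZ).sub ((hQmeas 0).comp hZ)).sub measurable_const
  -- bound on the weight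
  have hwbound : ∀ᵐ ω ∂μ, |T ω / g (Z ω) - (1 - T ω) / (1 - g (Z ω))| ≤ 1 / ε := by
    filter_upwards [hpos] with ω ⟨hge, hle⟩
    have hg0 : 0 < g (Z ω) := lt_of_lt_of_le hε hge
    have hg1 : 0 < 1 - g (Z ω) := by linarith
    have hεg : ε ≤ 1 - g (Z ω) := by linarith
    rcases hTbin ω with h0 | h1
    · rw [h0]
      simp only [zero_div, sub_zero, zero_sub, abs_neg]
      rw [abs_of_nonneg (by positivity)]
      rw [div_le_div_iff₀ hg1 hε]
      nlinarith
    · rw [h1]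
      simp only [sub_self, zero_div, sub_zero]
      rw [abs_of_nonneg (by positivity)]
      rw [div_le_div_iff₀ hg0 hε]
      nlinarith
  -- integrability of ζ²·weights
  have I1 : Integrable (fun ω => ζ ω ^ 2 * (T ω / g (Z ω) ^ 2
      + (1 - T ω) / (1 - g (Z ω)) ^ 2)) μ := by
    apply Integrable.mono' (hζsq.const_mul (2 / ε ^ 2))
    · exact ((hζ.pow_const 2).mul ((hT.div ((hg.comp hZ).pow_const 2)).add
        ((measurable_const.sub hT).div
          ((measurable_const.sub (hg.comp hZ)).pow_const 2)))).aestronglyMeasurable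
    · filter_upwards [hpos] with ω ⟨hge, hle⟩
      have hg0 : 0 < g (Z ω) := lt_of_lt_of_le hε hge
      have hg1 : 0 < 1 - g (Z ω) := by linarith
      have hεg : ε ≤ 1 - g (Z ω) := by linarith
      have h1 : T ω / g (Z ω) ^ 2 ≤ 1 / ε ^ 2 := by
        rcases hTbin ω with h0 | ht1
        · rw [h0, zero_div]; positivity
        · rw [ht1]
          rw [div_le_div_iff₀ (by positivity) (by positivity)]
          nlinarith
      have h2 : (1 - T ω) / (1 - g (Z ω)) ^ 2 ≤ 1 / ε ^ 2 := by
        rcases hTbin ω with h0 | ht1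
        · rw [h0, sub_zero]
          rw [div_le_div_iff₀ (by positivity) (by positivity)]
          nlinarith
        · rw [ht1, sub_self, zero_div]; positivity
      have hT0 : 0 ≤ T ω / g (Z ω) ^ 2 := by
        rcases hTbin ω with h0 | ht1
        · rw [h0, zero_div]
        · rw [ht1]; positivity
      have hT1 : 0 ≤ (1 - T ω) / (1 - g (Z ω)) ^ 2 := by
        rcases hTbin ω with h0 | ht1
        · rw [h0, sub_zero]; positivity
        · rw [ht1, sub_self, zero_div]
      rw [Real.norm_eq_abs, abs_mul, abs_of_nonneg (sq_nonneg _)]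
      have hsum : |T ω / g (Z ω) ^ 2 + (1 - T ω) / (1 - g (Z ω)) ^ 2| ≤ 2 / ε ^ 2 := by
        rw [abs_of_nonneg (by linarith)]
        have h22 : 2 / ε ^ 2 = 1 / ε ^ 2 + 1 / ε ^ 2 := by ring
        rw [h22]; exact add_le_add h1 h2
      calc ζ ω ^ 2 * |T ω / g (Z ω) ^ 2 + (1 - T ω) / (1 - g (Z ω)) ^ 2|
          ≤ ζ ω ^ 2 * (2 / ε ^ 2) :=
            mul_le_mul_of_nonneg_left hsum (by positivity)
        _ = 2 / ε ^ 2 * ζ ω ^ 2 := by ring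
  -- integrability of h·ζ
  have Ihζ : Integrable (fun ω => h ω * ζ ω) μ := by
    apply Integrable.mono' (((hBsq.add hζsq).const_mul (1 / (2 * ε))))
    · exact (hmeas_h.mul hζ).aestronglyMeasurable
    · filter_upwards [hwbound] with ω hw
      rw [Real.norm_eq_abs, hh, abs_mul, abs_mul]
      have hε0 : (0:ℝ) ≤ 1 / ε := by positivity
      have hAM : |Q 1 (Z ω) - Q 0 (Z ω) - ψ₀| * |ζ ω| ≤ (B ω ^ 2 + ζ ω ^ 2) / 2 := by
        have h2 := two_mul_le_add_sq |Q 1 (Z ω) - Q 0 (Z ω) - ψ₀| |ζ ω|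
        rw [sq_abs, sq_abs] at h2
        have hBe : B ω = Q 1 (Z ω) - Q 0 (Z ω) - ψ₀ := rfl
        rw [hBe]; linarith
      calc |T ω / g (Z ω) - (1 - T ω) / (1 - g (Z ω))| * |Q 1 (Z ω) - Q 0 (Z ω) - ψ₀| * |ζ ω|
          ≤ (1 / ε) * (|Q 1 (Z ω) - Q 0 (Z ω) - ψ₀| * |ζ ω|) := by
            rw [mul_assoc]
            exact mul_le_mul_of_nonneg_right hw (by positivity)
        _ ≤ (1 / ε) * ((B ω ^ 2 + ζ ω ^ 2) / 2) := mul_le_mul_of_nonneg_left hAM hε0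
        _ = 1 / (2 * ε) * (B ω ^ 2 + ζ ω ^ 2) := by ring
  -- the cross term vanishes
  have hm_le : MeasurableSpace.comap (fun ω => (T ω, Z ω)) inferInstance
      ≤ (by infer_instance : MeasurableSpace Ω) := (hT.prodMk hZ).comap_le
  have hsm : StronglyMeasurable[MeasurableSpace.comap (fun ω => (T ω, Z ω)) inferInstance] h := by
    have hF : Measurable (fun q : ℝ × ℝ =>
        (q.1 / g q.2 - (1 - q.1) / (1 - g q.2)) * (Q 1 q.2 - Q 0 q.2 - ψ₀)) := by
      apply Measurable.mul
      · exact (measurable_fst.div (hg.comp measurable_snd)).sub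
          ((measurable_const.sub measurable_fst).div
            (measurable_const.sub (hg.comp measurable_snd)))
      · exact (((hQmeas 1).comp measurable_snd).sub
          ((hQmeas 0).comp measurable_snd)).sub measurable_const
    exact (hF.comp (comap_measurable (fun ω => (T ω, Z ω)))).stronglyMeasurable
  have Ihζ' : Integrable (h * ζ) μ := Ihζ
  have hzero : ∫ ω, h ω * ζ ω ∂μ = 0 := by
    have hpull := condExp_mul_of_stronglyMeasurable_left hsm Ihζ' hζint
    have h2 : μ[h * ζ|MeasurableSpace.comap (fun ω => (T ω, Z ω)) inferInstance] =ᵐ[μ] 0 := by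
      refine hpull.trans ?_
      filter_upwards [hζmean] with ω hω
      simp only [Pi.mul_apply, Pi.zero_apply] at hω ⊢
      rw [hω, mul_zero]
    calc ∫ ω, h ω * ζ ω ∂μ = ∫ ω, (h * ζ) ω ∂μ := rfl
      _ = ∫ ω, (μ[h * ζ|MeasurableSpace.comap (fun ω => (T ω, Z ω)) inferInstance]) ω ∂μ :=
          (integral_condExp hm_le).symm
      _ = ∫ ω, (0:ℝ) ∂μ := integral_congr_ae h2
      _ = 0 := integral_zero _ _
  -- assemble
  have I2 : Integrable (fun ω => 2 * (h ω * ζ ω) + B ω ^ 2) μ := (Ihζ.const_mul 2).add hBsq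
  rw [integral_congr_ae key, integral_add I1 I2,
    integral_add (Ihζ.const_mul 2) hBsq, integral_const_mul, hzero, mul_zero, zero_add]
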